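/- Let G be a finite simple graph with adjacency matrix A and graph Laplacian L, let 0<α<1, and let i≠j be vertices with i reachable from j; set d = d(i,j). Then, as t→0⁺, (E_α(−t^α L))_{ij} = (t^{α d}/Γ(α d + 1))·(A^d)_{ij} + O(t^{α(d+1)}); that is, the function t ↦ (E_α(−t^α L))_{ij} − (t^{α d}/Γ(α d + 1))·(A^d)_{ij} is O(t^{α(d+1)}) as t tends to 0 from the right. In particular (E_α(−t^α L))_{ij} = O(t^{α d}). -/

import Mathlib

open Matrix Asymptotics Filter

/-- The Mittag-Leffler matrix function `E_α(M) = ∑_{k=0}^∞ M^k/Γ(αk+1)`, defined entrywise. -/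
noncomputable def mittagLefflerMatrix {n : ℕ} (α : ℝ) (M : Matrix (Fin n) (Fin n) ℝ) :
    Matrix (Fin n) (Fin n) ℝ :=
  Matrix.of fun i j => ∑' k : ℕ, ((M ^ k) i j) / Real.Gamma (α * k + 1)

lemma gamma_half_le {x : ℝ} (hx : 1 ≤ x) : (1/2 : ℝ) ≤ Real.Gamma x := by
  have hmono := Real.Gamma_strictMonoOn_Ici.monotoneOn
  rcases le_or_gt 2 x with h | h
  · have := hmono (by norm_num : (2:ℝ) ∈ Set.Ici 2) (Set.mem_Ici.mpr h) h
    rw [Real.Gamma_two] at this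
    linarith
  · have h2 : (1:ℝ) ≤ Real.Gamma (x + 1) := by
      have := hmono (by norm_num : (2:ℝ) ∈ Set.Ici 2)
        (Set.mem_Ici.mpr (by linarith : (2:ℝ) ≤ x + 1)) (by linarith)
      rw [Real.Gamma_two] at this
      linarith
    have h1 : Real.Gamma (x + 1) = x * Real.Gamma x := Real.Gamma_add_one (by linarith)
    nlinarith [Real.Gamma_pos_of_pos (show (0:ℝ) < x by linarith)]

section graph

variable {n : ℕ} (G : SimpleGraph (Fin n)) [DecidableRel G.Adj]

lemma lap_apply_ne (a b : Fin n) (hab : a ≠ b) :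
    G.lapMatrix ℝ a b = - G.adjMatrix ℝ a b := by
  simp [SimpleGraph.lapMatrix, SimpleGraph.degMatrix, Matrix.sub_apply,
    Matrix.diagonal_apply_ne _ hab]

lemma lap_abs_le (a b : Fin n) : |G.lapMatrix ℝ a b| ≤ (n : ℝ) := by
  rcases eq_or_ne a b with rfl | hab
  · have h1 : G.lapMatrix ℝ a a = (G.degree a : ℝ) := by
      simp [SimpleGraph.lapMatrix, SimpleGraph.degMatrix, Matrix.sub_apply]
    rw [h1, abs_of_nonneg (by positivity)]
    exact_mod_cast (G.degree_lt_card_verts a).le.trans (by simp)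
  · rw [lap_apply_ne G a b hab, abs_neg]
    have hn : (1:ℝ) ≤ n := by
      have := a.pos
      exact_mod_cast this
    by_cases h : G.Adj a b
    · simp only [SimpleGraph.adjMatrix_apply, if_pos h, abs_one]
      linarith
    · simp only [SimpleGraph.adjMatrix_apply, if_neg h, abs_zero]
      linarith

lemma pow_entry_bound {M : Matrix (Fin n) (Fin n) ℝ} {c : ℝ} (hc : 0 ≤ c)
    (hM : ∀ a b, |M a b| ≤ c) : ∀ (k : ℕ) (a b : Fin n), |(M ^ k) a b| ≤ ((n : ℝ) * c) ^ k := by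
  intro k
  induction k with
  | zero =>
    intro a b
    rcases eq_or_ne a b with rfl | hab
    · simp [Matrix.one_apply]
    · simp [Matrix.one_apply, hab]
  | succ k ih =>
    intro a b
    rw [pow_succ', Matrix.mul_apply]
    calc |∑ l, M a l * (M ^ k) l b| ≤ ∑ l, |M a l * (M ^ k) l b| := Finset.abs_sum_le_sum_abs _ _
      _ ≤ ∑ _l : Fin n, c * ((n : ℝ) * c) ^ k := by
          apply Finset.sum_le_sum
          intro l _
          rw [abs_mul]
          exact mul_le_mul (hM a l) (ih l b) (abs_nonneg _) hc
      _ = (n : ℝ) * c * ((n : ℝ) * c) ^ k := by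
          rw [Finset.sum_const, Finset.card_univ, Fintype.card_fin, nsmul_eq_mul]; ring
      _ = ((n : ℝ) * c) ^ (k + 1) := by rw [pow_succ]; ring

lemma pow_apply_eq_zero_of_lt_dist {M : Matrix (Fin n) (Fin n) ℝ}
    (hM : ∀ a b, a ≠ b → ¬G.Adj a b → M a b = 0) :
    ∀ (k : ℕ) (a b : Fin n), k < G.dist a b → (M ^ k) a b = 0 := by
  intro k
  induction k with
  | zero =>
    intro a b h
    have hab : a ≠ b := by rintro rfl; simp [SimpleGraph.dist_self] at h
    simp [Matrix.one_apply_ne hab]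
  | succ k ih =>
    intro a b h
    rw [pow_succ', Matrix.mul_apply]
    apply Finset.sum_eq_zero
    intro l _
    by_cases hla : l = a
    · subst hla
      rw [ih l b (by omega)]; ring
    · by_cases hadj : G.Adj a l
      · have hk : k < G.dist l b := by
          by_contra hcon
          push_neg at hcon
          have hr : G.Reachable a b := SimpleGraph.Reachable.of_dist_ne_zero (by omega)
          have hrl : G.Reachable l b := (hadj.reachable).symm.trans hr
          obtain ⟨p, hp⟩ := hrl.exists_walk_length_eq_dist
          have := G.dist_le (SimpleGraph.Walk.cons hadj p)
          rw [SimpleGraph.Walk.length_cons, hp] at this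
          omega
        rw [ih l b hk]; ring
      · rw [hM a l (Ne.symm hla) hadj]; ring

lemma lap_pow_eq_adj_pow :
    ∀ (k : ℕ) (a b : Fin n), k ≤ G.dist a b →
      ((G.lapMatrix ℝ) ^ k) a b = (-1 : ℝ) ^ k * ((G.adjMatrix ℝ ^ k) a b) := by
  have hLsupp : ∀ a b : Fin n, a ≠ b → ¬G.Adj a b → G.lapMatrix ℝ a b = 0 := by
    intro a b hab hadj
    rw [lap_apply_ne G a b hab]
    simp [hadj]
  have hAsupp : ∀ a b : Fin n, a ≠ b → ¬G.Adj a b → G.adjMatrix ℝ a b = 0 := by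
    intro a b _ hadj
    simp [hadj]
  intro k
  induction k with
  | zero => intro a b _; simp
  | succ k ih =>
    intro a b h
    rw [pow_succ' (G.lapMatrix ℝ) k, pow_succ' (G.adjMatrix ℝ) k,
      Matrix.mul_apply, Matrix.mul_apply, Finset.mul_sum]
    apply Finset.sum_congr rfl
    intro l _
    by_cases hla : l = a
    · subst hla
      rw [pow_apply_eq_zero_of_lt_dist G hLsupp k l b (by omega)]
      simp
    · by_cases hadj : G.Adj a l
      · have hk : k ≤ G.dist l b := by
          by_contra hcon
          push_neg at hcon
          have hr : G.Reachable a b := SimpleGraph.Reachable.of_dist_ne_zero (by omega)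
          have hrl : G.Reachable l b := (hadj.reachable).symm.trans hr
          obtain ⟨p, hp⟩ := hrl.exists_walk_length_eq_dist
          have := G.dist_le (SimpleGraph.Walk.cons hadj p)
          rw [SimpleGraph.Walk.length_cons, hp] at this
          omega
        rw [ih l b hk, lap_apply_ne G a l (Ne.symm hla)]
        ring
      · rw [hLsupp a l (Ne.symm hla) hadj, hAsupp a l (Ne.symm hla) hadj]
        ring

end graph

set_option maxHeartbeats 1000000 in
/-- Shortest-path dominance for the fractional heat kernel as `t → 0⁺`: with `d = d(i,j)`,
`(E_α(−t^α L))_{ij} = (t^{αd}/Γ(αd+1))·(A^d)_{ij} + O(t^{α(d+1)})`, and in particular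
`(E_α(−t^α L))_{ij} = O(t^{αd})`. -/
theorem mittagLeffler_heat_kernel_shortest_path_dominance
    (n : ℕ) (G : SimpleGraph (Fin n)) [DecidableRel G.Adj]
    (α : ℝ) (hα0 : 0 < α) (hα1 : α < 1)
    (i j : Fin n) (hij : i ≠ j) (hreach : G.Reachable i j) :
    (fun t : ℝ => mittagLefflerMatrix α (-(t ^ α) • G.lapMatrix ℝ) i j -
        t ^ (α * G.dist i j) / Real.Gamma (α * G.dist i j + 1) *
          (G.adjMatrix ℝ ^ G.dist i j) i j)
      =O[nhdsWithin 0 (Set.Ioi 0)] (fun t : ℝ => t ^ (α * (G.dist i j + 1))) ∧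
    (fun t : ℝ => mittagLefflerMatrix α (-(t ^ α) • G.lapMatrix ℝ) i j)
      =O[nhdsWithin 0 (Set.Ioi 0)] (fun t : ℝ => t ^ (α * G.dist i j)) := by
  classical
  set d := G.dist i j with hd
  set L := G.lapMatrix ℝ with hL
  set A := G.adjMatrix ℝ with hA
  have hd1 : 1 ≤ d := hreach.pos_dist_of_ne hij
  have hn : (1:ℝ) ≤ n := by exact_mod_cast i.pos
  set C : ℝ := (n:ℝ) * (n:ℝ) with hC
  have hC1 : 1 ≤ C := by nlinarith
  have hC0 : 0 < C := by linarith
  have hLbound : ∀ (k:ℕ) (a b : Fin n), |(L ^ k) a b| ≤ C ^ k := by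
    intro k a b
    simpa using pow_entry_bound (c := (n:ℝ)) (by positivity) (lap_abs_le G) k a b
  have hGam : ∀ k : ℕ, (1/2 : ℝ) ≤ Real.Gamma (α * k + 1) := by
    intro k
    apply gamma_half_le
    have : (0:ℝ) ≤ α * k := by positivity
    linarith
  have hGamPos : ∀ k : ℕ, (0:ℝ) < Real.Gamma (α * k + 1) := fun k => lt_of_lt_of_le (by norm_num) (hGam k)
  have hLsupp : ∀ a b : Fin n, a ≠ b → ¬G.Adj a b → L a b = 0 := by
    intro a b hab hadj
    rw [hL, lap_apply_ne G a b hab]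
    simp [hadj]
  set g : ℝ → ℕ → ℝ := fun t k => ((-(t ^ α)) ^ k * ((L ^ k) i j)) / Real.Gamma (α * k + 1)
    with hgdef
  have hentry : ∀ t : ℝ, mittagLefflerMatrix α (-(t ^ α) • L) i j = ∑' k : ℕ, g t k := by
    intro t
    simp only [mittagLefflerMatrix, Matrix.of_apply, hgdef]
    congr 1
    funext k
    rw [smul_pow, Matrix.smul_apply, smul_eq_mul]
  -- pointwise facts for good t
  have key : ∀ t : ℝ, 0 < t → t ^ α * C ≤ 1 / 2 →
      (mittagLefflerMatrix α (-(t ^ α) • L) i j -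
        t ^ (α * (d:ℝ)) / Real.Gamma (α * (d:ℝ) + 1) * ((A ^ d) i j)
        = ∑' k : ℕ, g t (k + (d+1))) ∧
      |∑' k : ℕ, g t (k + (d+1))| ≤ 4 * C^(d+1) * t ^ (α * ((d:ℝ)+1)) := by
    intro t ht htC
    have hs0 : (0:ℝ) ≤ t ^ α := Real.rpow_nonneg ht.le α
    have hsC0 : (0:ℝ) ≤ t ^ α * C := by positivity
    have hgb : ∀ k : ℕ, |g t k| ≤ 2 * (t ^ α * C) ^ k := by
      intro k
      have h1 : |g t k| = (t ^ α) ^ k * |(L ^ k) i j| / Real.Gamma (α * k + 1) := by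
        rw [hgdef]
        rw [abs_div, abs_mul, abs_pow, abs_neg, abs_of_nonneg hs0,
          abs_of_nonneg (hGamPos k).le]
      rw [h1]
      have h2 : (t ^ α) ^ k * |(L ^ k) i j| ≤ (t ^ α * C) ^ k := by
        rw [mul_pow]
        exact mul_le_mul_of_nonneg_left (hLbound k i j) (by positivity)
      calc (t ^ α) ^ k * |(L ^ k) i j| / Real.Gamma (α * k + 1)
          ≤ (t ^ α * C) ^ k / (1/2) := by
            apply div_le_div₀ (by positivity) h2 (by norm_num) (hGam k)
        _ = 2 * (t ^ α * C) ^ k := by ring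
    have hgeo : Summable (fun k : ℕ => 2 * ((1:ℝ)/2) ^ k) :=
      (summable_geometric_of_lt_one (by norm_num) (by norm_num)).mul_left 2
    have hnorm : Summable (fun k : ℕ => |g t k|) := by
      apply Summable.of_nonneg_of_le (fun k => abs_nonneg _) _ hgeo
      intro k
      calc |g t k| ≤ 2 * (t ^ α * C) ^ k := hgb k
        _ ≤ 2 * ((1:ℝ)/2) ^ k := by
            have := pow_le_pow_left₀ hsC0 htC k
            linarith
    have hsum : Summable (g t) := hnorm.of_abs
    have hsplit := Summable.sum_add_tsum_nat_add (d+1) hsum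
    have hspow : ∀ m : ℕ, (t ^ α) ^ m = t ^ (α * (m:ℝ)) := by
      intro m
      rw [Real.rpow_mul ht.le, Real.rpow_natCast]
    have hsum_range : ∑ k ∈ Finset.range (d+1), g t k
        = t ^ (α * (d:ℝ)) / Real.Gamma (α * (d:ℝ) + 1) * ((A ^ d) i j) := by
      rw [Finset.sum_eq_single_of_mem d (Finset.self_mem_range_succ d)]
      · rw [hgdef]
        simp only
        rw [lap_pow_eq_adj_pow G d i j le_rfl, neg_pow, hspow d, ← hA]
        have hne : ((-1:ℝ)^d) * ((-1:ℝ)^d) = 1 := by rw [← mul_pow]; norm_num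
        have hΓ := (hGamPos d).ne'
        field_simp
        linear_combination ((A ^ d) i j) * hne
      · intro k hk hkd
        have hklt : k < d + 1 := Finset.mem_range.mp hk
        have hkd' : k < d := by omega
        rw [hgdef]
        simp only
        rw [pow_apply_eq_zero_of_lt_dist G hLsupp k i j hkd']
        simp
    constructor
    · rw [hentry t, ← hsplit, hsum_range]
      ring
    · have hshift : Summable (fun k : ℕ => |g t (k + (d+1))|) :=
        (summable_nat_add_iff (d+1)).mpr hnorm
      calc |∑' k : ℕ, g t (k + (d+1))| ≤ ∑' k : ℕ, |g t (k + (d+1))| := by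
            have h := norm_tsum_le_tsum_norm (f := fun k : ℕ => g t (k + (d+1)))
              (by simpa only [Real.norm_eq_abs] using hshift)
            simpa only [Real.norm_eq_abs] using h
        _ ≤ ∑' k : ℕ, (2 * (t ^ α * C) ^ (d+1)) * ((1:ℝ)/2) ^ k := by
            apply Summable.tsum_le_tsum _ hshift
              (((summable_geometric_of_lt_one (by norm_num) (by norm_num))).mul_left _)
            intro k
            calc |g t (k + (d+1))| ≤ 2 * (t ^ α * C) ^ (k + (d+1)) := hgb _
              _ = (2 * (t ^ α * C) ^ (d+1)) * (t ^ α * C) ^ k := by ring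
              _ ≤ (2 * (t ^ α * C) ^ (d+1)) * ((1:ℝ)/2) ^ k := by
                  apply mul_le_mul_of_nonneg_left (pow_le_pow_left₀ hsC0 htC k) (by positivity)
        _ = (2 * (t ^ α * C) ^ (d+1)) * ((1:ℝ) - 1/2)⁻¹ := by
            rw [tsum_mul_left, tsum_geometric_of_lt_one (by norm_num) (by norm_num)]
        _ = 4 * C^(d+1) * (t ^ α) ^ (d+1) := by
            rw [mul_pow]
            ring
        _ = 4 * C^(d+1) * t ^ (α * ((d:ℝ)+1)) := by
            rw [hspow (d+1)]
            push_cast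
            ring
  -- first big-O
  have hBigO1 : (fun t : ℝ => mittagLefflerMatrix α (-(t ^ α) • L) i j -
        t ^ (α * (d:ℝ)) / Real.Gamma (α * (d:ℝ) + 1) * ((A ^ d) i j))
      =O[nhdsWithin 0 (Set.Ioi 0)] (fun t : ℝ => t ^ (α * ((d:ℝ) + 1))) := by
    rw [isBigO_iff]
    refine ⟨4 * C^(d+1), ?_⟩
    have hev : ∀ᶠ t in nhdsWithin 0 (Set.Ioi 0), t ^ α * C < 1/2 := by
      have hc : ContinuousAt (fun t : ℝ => t ^ α * C) 0 := by
        exact (Real.continuousAt_rpow_const 0 α (Or.inr hα0.le)).mul continuousAt_const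
      have := hc.tendsto.mono_left (nhdsWithin_le_nhds (s := Set.Ioi (0:ℝ)))
      rw [show (0:ℝ) ^ α * C = 0 by simp [Real.zero_rpow hα0.ne']] at this
      exact this.eventually (eventually_lt_nhds (by norm_num : (0:ℝ) < 1/2))
    filter_upwards [hev, self_mem_nhdsWithin] with t htC htpos
    obtain ⟨heq, hb⟩ := key t htpos htC.le
    rw [heq]
    calc |∑' k : ℕ, g t (k + (d+1))| ≤ 4 * C^(d+1) * t ^ (α * ((d:ℝ)+1)) := hb
      _ = 4 * C^(d+1) * ‖t ^ (α * ((d:ℝ)+1))‖ := by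
          rw [Real.norm_eq_abs, abs_of_nonneg (Real.rpow_nonneg htpos.le _)]
  have hpowO : (fun t : ℝ => t ^ (α * ((d:ℝ) + 1)))
      =O[nhdsWithin 0 (Set.Ioi 0)] (fun t : ℝ => t ^ (α * (d:ℝ))) := by
    rw [isBigO_iff]
    refine ⟨1, ?_⟩
    have hIoo : Set.Ioo (0:ℝ) 1 ∈ nhdsWithin 0 (Set.Ioi 0) :=
      Ioo_mem_nhdsGT_of_mem (by norm_num : (0:ℝ) ∈ Set.Ico (0:ℝ) 1)
    filter_upwards [hIoo] with t ht
    obtain ⟨ht0, ht1⟩ := ht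
    rw [Real.norm_eq_abs, Real.norm_eq_abs, abs_of_nonneg (Real.rpow_nonneg ht0.le _),
      abs_of_nonneg (Real.rpow_nonneg ht0.le _), one_mul]
    have : α * ((d:ℝ) + 1) = α * (d:ℝ) + α := by ring
    rw [this, Real.rpow_add ht0]
    have hle1 : t ^ α ≤ 1 := Real.rpow_le_one ht0.le ht1.le hα0.le
    nlinarith [Real.rpow_pos_of_pos ht0 (α * (d:ℝ))]
  have hmainO : (fun t : ℝ => t ^ (α * (d:ℝ)) / Real.Gamma (α * (d:ℝ) + 1) * ((A ^ d) i j))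
      =O[nhdsWithin 0 (Set.Ioi 0)] (fun t : ℝ => t ^ (α * (d:ℝ))) := by
    have : (fun t : ℝ => t ^ (α * (d:ℝ)) / Real.Gamma (α * (d:ℝ) + 1) * ((A ^ d) i j))
        = fun t : ℝ => (((A ^ d) i j) / Real.Gamma (α * (d:ℝ) + 1)) * t ^ (α * (d:ℝ)) := by
      funext t; ring
    rw [this]
    exact (isBigO_refl _ _).const_mul_left _
  refine ⟨hBigO1, ?_⟩
  have := (hBigO1.trans hpowO).add hmainO
  have heqfun : (fun t : ℝ => mittagLefflerMatrix α (-(t ^ α) • L) i j)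
      = fun t : ℝ => (mittagLefflerMatrix α (-(t ^ α) • L) i j -
          t ^ (α * (d:ℝ)) / Real.Gamma (α * (d:ℝ) + 1) * ((A ^ d) i j)) +
          t ^ (α * (d:ℝ)) / Real.Gamma (α * (d:ℝ) + 1) * ((A ^ d) i j) := by
    funext t; ring
  rw [heqfun]
  exact this
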